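/- Let d'₁ be the antiderivation of 𝔄(g) with d'₁B = −ψ, d'₁β = φ, d'₁(other generators) = 0. Then on the base ℬ(g), the operator dd'₁ + d'₁d equals the degree operator counting total degree in the generators (ψ, φ, B, β). -/

import Mathlib

open scoped TensorProduct

noncomputable section

/-- The graded bracket on `g ⊗ Ω` induced by `[X⊗P, Y⊗Q] = ⁅X,Y⁆ ⊗ (P*Q)`. -/
def gaBracket (g : Type) [LieRing g] [LieAlgebra ℂ g] (Ω : Type) [Ring Ω] [Algebra ℂ Ω] :
    (g ⊗[ℂ] Ω) →ₗ[ℂ] (g ⊗[ℂ] Ω) →ₗ[ℂ] (g ⊗[ℂ] Ω) :=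
  TensorProduct.map₂
    (LinearMap.mk₂ ℂ (fun X Y => ⁅X, Y⁆)
      (by intros; simp [add_lie]) (by intros; simp [smul_lie])
      (by intros; simp [lie_add]) (by intros; simp [lie_smul]))
    (LinearMap.mul ℂ Ω)

/-- The submodule of `g ⊗ Ω` of `g`-valued elements with components in a submodule `S` of `Ω`. -/
def gvSub (g : Type) [LieRing g] [LieAlgebra ℂ g] {Ω : Type} [AddCommGroup Ω] [Module ℂ Ω]
    (S : Submodule ℂ Ω) : Submodule ℂ (g ⊗[ℂ] Ω) :=
  LinearMap.range (LinearMap.lTensor g S.subtype)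

/-- A bigraded-commutative algebra structure on `Ω` given by bidegree pieces `gr k l`. -/
def IsBigradedCommAlg (Ω : Type) [Ring Ω] [Algebra ℂ Ω] (gr : ℕ → ℕ → Submodule ℂ Ω) : Prop :=
  (1 : Ω) ∈ gr 0 0 ∧
  (∀ k l m n, ∀ a ∈ gr k l, ∀ b ∈ gr m n, a * b ∈ gr (k + m) (l + n)) ∧
  (∀ k l m n, ∀ a ∈ gr k l, ∀ b ∈ gr m n,
      a * b = ((-1 : ℂ)) ^ ((k + l) * (m + n)) • (b * a)) ∧
  DirectSum.IsInternal (fun p : ℕ × ℕ => gr p.1 p.2)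

/-- An antiderivation with respect to the total degree of a bigrading. -/
def IsAntideriv {Ω : Type} [Ring Ω] [Algebra ℂ Ω] (gr : ℕ → ℕ → Submodule ℂ Ω)
    (R : Ω →ₗ[ℂ] Ω) : Prop :=
  ∀ k l, ∀ a ∈ gr k l, ∀ b, R (a * b) = R a * b + ((-1 : ℂ)) ^ (k + l) • (a * R b)

/-- The bigraded Weil algebra data: a bigraded-commutative differential algebra with
differentials `d`, `δ` of bidegrees `(1,0)`, `(0,1)` and `g`-valued generators
`A, α, F, φ, ψ, ξ, B, β` satisfying the structure equations of Lemma 1.1. -/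
structure BigradedWeil (g : Type) [LieRing g] [LieAlgebra ℂ g]
    (𝔄 : Type) [Ring 𝔄] [Algebra ℂ 𝔄] where
  gr : ℕ → ℕ → Submodule ℂ 𝔄
  graded : IsBigradedCommAlg 𝔄 gr
  d : 𝔄 →ₗ[ℂ] 𝔄
  δ : 𝔄 →ₗ[ℂ] 𝔄
  d_antideriv : IsAntideriv gr d
  δ_antideriv : IsAntideriv gr δ
  d_gr : ∀ k l, ∀ x ∈ gr k l, d x ∈ gr (k + 1) l
  δ_gr : ∀ k l, ∀ x ∈ gr k l, δ x ∈ gr k (l + 1)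
  d_sq : ∀ x, d (d x) = 0
  δ_sq : ∀ x, δ (δ x) = 0
  d_δ : ∀ x, d (δ x) + δ (d x) = 0
  A : g ⊗[ℂ] 𝔄
  α : g ⊗[ℂ] 𝔄
  F : g ⊗[ℂ] 𝔄
  φ : g ⊗[ℂ] 𝔄
  ψ : g ⊗[ℂ] 𝔄
  ξ : g ⊗[ℂ] 𝔄
  B : g ⊗[ℂ] 𝔄
  β : g ⊗[ℂ] 𝔄
  A_mem : A ∈ gvSub g (gr 1 0)
  α_mem : α ∈ gvSub g (gr 0 1)
  F_mem : F ∈ gvSub g (gr 2 0)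
  φ_mem : φ ∈ gvSub g (gr 0 2)
  ψ_mem : ψ ∈ gvSub g (gr 1 1)
  ξ_mem : ξ ∈ gvSub g (gr 1 1)
  B_mem : B ∈ gvSub g (gr 2 1)
  β_mem : β ∈ gvSub g (gr 1 2)
  eqF : F = LinearMap.lTensor g d A + (2⁻¹ : ℂ) • gaBracket g 𝔄 A A
  eqφ : φ = LinearMap.lTensor g δ α + (2⁻¹ : ℂ) • gaBracket g 𝔄 α α
  eqψ : ψ = LinearMap.lTensor g δ A + LinearMap.lTensor g d α + gaBracket g 𝔄 A α
  eqξ : ξ = LinearMap.lTensor g δ A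
  eqB : B = LinearMap.lTensor g δ F + gaBracket g 𝔄 α F
  eqβ : β = LinearMap.lTensor g d φ + gaBracket g 𝔄 A φ

/-- The universal property expressing that the bigraded-commutative algebra `𝔄` is free on
the given list of `g`-valued generators with the given bidegrees. -/
def FreeOn (g : Type) [LieRing g] [LieAlgebra ℂ g] {𝔄 : Type} [Ring 𝔄] [Algebra ℂ 𝔄]
    (gr : ℕ → ℕ → Submodule ℂ 𝔄) {m : ℕ} (gens : Fin m → (ℕ × ℕ) × (g ⊗[ℂ] 𝔄)) : Prop :=
  ∀ (Ω : Type) [Ring Ω] [Algebra ℂ Ω] (grΩ : ℕ → ℕ → Submodule ℂ Ω),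
    IsBigradedCommAlg Ω grΩ →
    ∀ v : Fin m → g ⊗[ℂ] Ω,
      (∀ j, v j ∈ gvSub g (grΩ (gens j).1.1 (gens j).1.2)) →
      ∃! h : 𝔄 →ₐ[ℂ] Ω,
        (∀ k l, ∀ x ∈ gr k l, h x ∈ grΩ k l) ∧
        ∀ j, LinearMap.lTensor g h.toLinearMap (gens j).2 = v j

/-- The list of generators of the bigraded Weil algebra with their bidegrees. -/
def BigradedWeil.gens {g : Type} [LieRing g] [LieAlgebra ℂ g] {𝔄 : Type} [Ring 𝔄]
    [Algebra ℂ 𝔄] (W : BigradedWeil g 𝔄) : Fin 8 → (ℕ × ℕ) × (g ⊗[ℂ] 𝔄) :=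
  ![((1, 0), W.A), ((0, 1), W.α), ((2, 0), W.F), ((0, 2), W.φ),
    ((1, 1), W.ψ), ((1, 1), W.ξ), ((2, 1), W.B), ((1, 2), W.β)]

/-- The `i`-th component in `𝔄` of a `g`-valued element of `g ⊗ 𝔄`, w.r.t. a basis of `g`. -/
def coordEv {g : Type} [LieRing g] [LieAlgebra ℂ g] {ι : Type} (b : Module.Basis ι ℂ g)
    {𝔄 : Type} [Ring 𝔄] [Algebra ℂ 𝔄] (i : ι) : g ⊗[ℂ] 𝔄 →ₗ[ℂ] 𝔄 :=
  (TensorProduct.lid ℂ 𝔄).toLinearMap ∘ₗ LinearMap.rTensor 𝔄 (b.coord i)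

/-- Evaluation of a multilinear form `I` on `g` on `g`-valued elements `Z j ∈ g ⊗ 𝔄`,
multiplying the `𝔄`-components in order. -/
def multiEval {g : Type} [LieRing g] [LieAlgebra ℂ g] {ι : Type} [Fintype ι]
    (b : Module.Basis ι ℂ g) {𝔄 : Type} [Ring 𝔄] [Algebra ℂ 𝔄] {n : ℕ}
    (I : MultilinearMap ℂ (fun _ : Fin n => g) ℂ) (Z : Fin n → g ⊗[ℂ] 𝔄) : 𝔄 :=
  ∑ iv : Fin n → ι, I (fun j => b (iv j)) • (List.ofFn fun j => coordEv b (iv j) (Z j)).prod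

/-- `ad`-invariance of a multilinear form on `g`. -/
def IsInvForm {g : Type} [LieRing g] [LieAlgebra ℂ g] {n : ℕ}
    (I : MultilinearMap ℂ (fun _ : Fin n => g) ℂ) : Prop :=
  ∀ (X : g) (v : Fin n → g), ∑ j, I (Function.update v j ⁅v j, X⁆) = 0

/-- Symmetry of a multilinear form on `g`. -/
def IsSymForm {g : Type} [LieRing g] [LieAlgebra ℂ g] {n : ℕ}
    (I : MultilinearMap ℂ (fun _ : Fin n => g) ℂ) : Prop :=
  ∀ (σ : Equiv.Perm (Fin n)) (v : Fin n → g), I (fun j => v (σ j)) = I v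

/-- The five `g`-valued elements `F, ψ, φ, B, β` of the bigraded Weil algebra. -/
def BigradedWeil.genOf {g : Type} [LieRing g] [LieAlgebra ℂ g] {𝔄 : Type} [Ring 𝔄]
    [Algebra ℂ 𝔄] (W : BigradedWeil g 𝔄) : Fin 5 → g ⊗[ℂ] 𝔄 :=
  ![W.F, W.ψ, W.φ, W.B, W.β]

/-- The base `ℬ(g) ⊆ 𝔄(g)`: the span of the invariant "polynomials" `𝓘(F,ψ,φ,B,β)`. -/
def baseB {g : Type} [LieRing g] [LieAlgebra ℂ g] {ι : Type} [Fintype ι] (b : Module.Basis ι ℂ g)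
    {𝔄 : Type} [Ring 𝔄] [Algebra ℂ 𝔄] (W : BigradedWeil g 𝔄) : Submodule ℂ 𝔄 :=
  Submodule.span ℂ { x | ∃ (n : ℕ) (I : MultilinearMap ℂ (fun _ : Fin n => g) ℂ)
      (c : Fin n → Fin 5), IsInvForm I ∧ x = multiEval b I (fun j => W.genOf (c j)) }

end

noncomputable section

section Stmt10Aux

set_option linter.unusedSectionVars false

variable {g : Type} [LieRing g] [LieAlgebra ℂ g] {ι : Type} [Fintype ι] (b : Module.Basis ι ℂ g)
variable {𝔄 : Type} [Ring 𝔄] [Algebra ℂ 𝔄]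

lemma gaBracket_tmul (X Y : g) (P Q : 𝔄) :
    gaBracket g 𝔄 (X ⊗ₜ P) (Y ⊗ₜ Q) = ⁅X, Y⁆ ⊗ₜ (P * Q) := by
  simp [gaBracket]

lemma coordEv_tmul (i : ι) (X : g) (P : 𝔄) : coordEv b i (X ⊗ₜ P) = b.repr X i • P := by
  simp [coordEv]

lemma coordEv_lTensor (i : ι) (f : 𝔄 →ₗ[ℂ] 𝔄) (z : g ⊗[ℂ] 𝔄) :
    coordEv b i (LinearMap.lTensor g f z) = f (coordEv b i z) := by
  induction z using TensorProduct.induction_on with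
  | zero => simp
  | tmul X P => simp [coordEv_tmul, map_smul]
  | add x y hx hy => simp [map_add, hx, hy]

lemma expand (z : g ⊗[ℂ] 𝔄) : z = ∑ i, b i ⊗ₜ coordEv b i z := by
  induction z using TensorProduct.induction_on with
  | zero => simp
  | tmul X P =>
      simp only [coordEv_tmul]
      have : ∀ x : ι, b x ⊗ₜ[ℂ] (b.repr X x • P) = (b.repr X x • b x) ⊗ₜ[ℂ] P := by
        intro x; rw [TensorProduct.smul_tmul]
      rw [Finset.sum_congr rfl (fun x _ => this x), ← TensorProduct.sum_tmul, Module.Basis.sum_repr]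
  | add x y hx hy =>
      simp only [map_add, TensorProduct.tmul_add]
      rw [Finset.sum_add_distrib, ← hx, ← hy]

set_option linter.unusedSectionVars false

lemma mem_gvSub_iff (S : Submodule ℂ 𝔄) (z : g ⊗[ℂ] 𝔄) :
    z ∈ gvSub g S ↔ ∀ i, coordEv b i z ∈ S := by
  constructor
  · rintro ⟨w, rfl⟩ i
    induction w using TensorProduct.induction_on with
    | zero => simp
    | tmul X P => simp only [LinearMap.lTensor_tmul, coordEv_tmul, Submodule.coe_subtype]
                  exact S.smul_mem _ P.2
    | add x y hx hy => simp only [map_add]; exact S.add_mem hx hy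
  · intro h
    refine ⟨∑ i, b i ⊗ₜ (⟨coordEv b i z, h i⟩ : S), ?_⟩
    rw [map_sum]
    simp only [LinearMap.lTensor_tmul, Submodule.coe_subtype]
    exact (expand b z).symm

lemma gaBracket_expand (u v : g ⊗[ℂ] 𝔄) :
    gaBracket g 𝔄 u v = ∑ j, ∑ k, ⁅b j, b k⁆ ⊗ₜ (coordEv b j u * coordEv b k v) := by
  have h1 : gaBracket g 𝔄 u v = ∑ j, gaBracket g 𝔄 (b j ⊗ₜ coordEv b j u) v := by
    conv_lhs => rw [expand b u]
    rw [map_sum, LinearMap.sum_apply]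
  rw [h1]
  refine Finset.sum_congr rfl fun j _ => ?_
  conv_lhs => rw [expand b v]
  rw [map_sum]
  exact Finset.sum_congr rfl fun k _ => gaBracket_tmul _ _ _ _

include b in
lemma gvSub_map {S T : Submodule ℂ 𝔄} (f : 𝔄 →ₗ[ℂ] 𝔄) (hf : ∀ x ∈ S, f x ∈ T)
    {z : g ⊗[ℂ] 𝔄} (hz : z ∈ gvSub g S) : LinearMap.lTensor g f z ∈ gvSub g T := by
  rw [mem_gvSub_iff b] at hz ⊢
  intro i; rw [coordEv_lTensor]; exact hf _ (hz i)

include b in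
lemma gaBracket_mem {gr : ℕ → ℕ → Submodule ℂ 𝔄} (hg : IsBigradedCommAlg 𝔄 gr)
    {k l m n : ℕ} {u v : g ⊗[ℂ] 𝔄} (hu : u ∈ gvSub g (gr k l)) (hv : v ∈ gvSub g (gr m n)) :
    gaBracket g 𝔄 u v ∈ gvSub g (gr (k + m) (l + n)) := by
  rw [mem_gvSub_iff b] at hu hv ⊢
  intro i
  rw [gaBracket_expand b, map_sum]
  refine Submodule.sum_mem _ fun j _ => ?_
  rw [map_sum]
  refine Submodule.sum_mem _ fun p _ => ?_
  rw [coordEv_tmul]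
  exact Submodule.smul_mem _ _ (hg.2.1 _ _ _ _ _ (hu j) _ (hv p))

include b in
lemma lTensor_gaBracket {gr : ℕ → ℕ → Submodule ℂ 𝔄} {R : 𝔄 →ₗ[ℂ] 𝔄}
    (hR : IsAntideriv gr R) {k l : ℕ} {u : g ⊗[ℂ] 𝔄} (hu : u ∈ gvSub g (gr k l))
    (v : g ⊗[ℂ] 𝔄) :
    LinearMap.lTensor g R (gaBracket g 𝔄 u v)
      = gaBracket g 𝔄 (LinearMap.lTensor g R u) v
        + ((-1 : ℂ)) ^ (k + l) • gaBracket g 𝔄 u (LinearMap.lTensor g R v) := by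
  rw [mem_gvSub_iff b] at hu
  rw [gaBracket_expand b u v, gaBracket_expand b (LinearMap.lTensor g R u) v,
    gaBracket_expand b u (LinearMap.lTensor g R v), map_sum, Finset.smul_sum,
    ← Finset.sum_add_distrib]
  refine Finset.sum_congr rfl fun j _ => ?_
  rw [map_sum, Finset.smul_sum, ← Finset.sum_add_distrib]
  refine Finset.sum_congr rfl fun p _ => ?_
  rw [LinearMap.lTensor_tmul, coordEv_lTensor, coordEv_lTensor,
    hR k l _ (hu j) _, TensorProduct.tmul_add, TensorProduct.tmul_smul]

include b in
lemma gaBracket_symm {gr : ℕ → ℕ → Submodule ℂ 𝔄} (hg : IsBigradedCommAlg 𝔄 gr)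
    {k l m n : ℕ} {u v : g ⊗[ℂ] 𝔄} (hu : u ∈ gvSub g (gr k l)) (hv : v ∈ gvSub g (gr m n)) :
    gaBracket g 𝔄 u v = -(((-1 : ℂ)) ^ ((k + l) * (m + n)) • gaBracket g 𝔄 v u) := by
  rw [mem_gvSub_iff b] at hu hv
  rw [gaBracket_expand b u v, gaBracket_expand b v u, Finset.smul_sum, ← Finset.sum_neg_distrib,
    Finset.sum_comm]
  refine Finset.sum_congr rfl fun j _ => ?_
  rw [Finset.smul_sum, ← Finset.sum_neg_distrib]
  refine Finset.sum_congr rfl fun p _ => ?_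
  rw [hg.2.2.1 _ _ _ _ _ (hu p) _ (hv j), TensorProduct.tmul_smul, ← lie_skew (b j),
    TensorProduct.neg_tmul, smul_neg, neg_neg]

omit [Fintype ι] in
lemma gaBracket_jacobi_pure {gr : ℕ → ℕ → Submodule ℂ 𝔄} (hg : IsBigradedCommAlg 𝔄 gr)
    {k l m n : ℕ} (X Y : g) {P Q : 𝔄} (hP : P ∈ gr k l) (hQ : Q ∈ gr m n) (w : g ⊗[ℂ] 𝔄) :
    gaBracket g 𝔄 (X ⊗ₜ P) (gaBracket g 𝔄 (Y ⊗ₜ Q) w)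
      = gaBracket g 𝔄 (gaBracket g 𝔄 (X ⊗ₜ P) (Y ⊗ₜ Q)) w
        + ((-1 : ℂ)) ^ ((k + l) * (m + n)) • gaBracket g 𝔄 (Y ⊗ₜ Q) (gaBracket g 𝔄 (X ⊗ₜ P) w) := by
  induction w using TensorProduct.induction_on with
  | zero => simp
  | tmul Z R =>
      rw [gaBracket_tmul, gaBracket_tmul, gaBracket_tmul, gaBracket_tmul, gaBracket_tmul,
        gaBracket_tmul]
      have hcomm : Q * (P * R) = ((-1 : ℂ)) ^ ((m + n) * (k + l)) • (P * (Q * R)) := by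
        rw [← mul_assoc, hg.2.2.1 _ _ _ _ _ hQ _ hP, smul_mul_assoc, mul_assoc]
      rw [hcomm, TensorProduct.tmul_smul, smul_smul, ← pow_add, Nat.mul_comm (m + n) (k + l),
        ← Nat.two_mul, pow_mul, neg_one_sq, one_pow, one_smul, leibniz_lie X Y Z,
        TensorProduct.add_tmul, mul_assoc]
  | add x y hx hy =>
      simp only [map_add, hx, hy, smul_add]
      abel

include b in
lemma gaBracket_jacobi_pl {gr : ℕ → ℕ → Submodule ℂ 𝔄} (hg : IsBigradedCommAlg 𝔄 gr)
    {k l m n : ℕ} (X : g) {P : 𝔄} (hP : P ∈ gr k l) {v : g ⊗[ℂ] 𝔄} (hv : v ∈ gvSub g (gr m n))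
    (w : g ⊗[ℂ] 𝔄) :
    gaBracket g 𝔄 (X ⊗ₜ P) (gaBracket g 𝔄 v w)
      = gaBracket g 𝔄 (gaBracket g 𝔄 (X ⊗ₜ P) v) w
        + ((-1 : ℂ)) ^ ((k + l) * (m + n)) • gaBracket g 𝔄 v (gaBracket g 𝔄 (X ⊗ₜ P) w) := by
  rw [mem_gvSub_iff b] at hv
  rw [expand b v]
  simp only [map_sum, LinearMap.sum_apply, Finset.smul_sum]
  rw [← Finset.sum_add_distrib]
  exact Finset.sum_congr rfl fun p _ => gaBracket_jacobi_pure hg X (b p) hP (hv p) w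

include b in
lemma gaBracket_jacobi {gr : ℕ → ℕ → Submodule ℂ 𝔄} (hg : IsBigradedCommAlg 𝔄 gr)
    {k l m n : ℕ} {u v : g ⊗[ℂ] 𝔄} (hu : u ∈ gvSub g (gr k l)) (hv : v ∈ gvSub g (gr m n))
    (w : g ⊗[ℂ] 𝔄) :
    gaBracket g 𝔄 u (gaBracket g 𝔄 v w)
      = gaBracket g 𝔄 (gaBracket g 𝔄 u v) w
        + ((-1 : ℂ)) ^ ((k + l) * (m + n)) • gaBracket g 𝔄 v (gaBracket g 𝔄 u w) := by
  have hu' := (mem_gvSub_iff b _ _).1 hu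
  rw [expand b u]
  simp only [map_sum, LinearMap.sum_apply, Finset.smul_sum]
  rw [← Finset.sum_add_distrib]
  exact Finset.sum_congr rfl fun j _ => gaBracket_jacobi_pl b hg (b j) (hu' j) hv w

omit [Fintype ι] in
lemma antideriv_map_one {gr : ℕ → ℕ → Submodule ℂ 𝔄} (hone : (1 : 𝔄) ∈ gr 0 0)
    {R : 𝔄 →ₗ[ℂ] 𝔄} (hR : IsAntideriv gr R) : R 1 = 0 := by
  have h := hR 0 0 1 hone 1
  norm_num at h
  exact h

omit [Fintype ι] in
lemma Lmul {gr : ℕ → ℕ → Submodule ℂ 𝔄} {d d₁' : 𝔄 →ₗ[ℂ] 𝔄}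
    (hd : IsAntideriv gr d) (h₁ : IsAntideriv gr d₁')
    (hdgr : ∀ k l, ∀ x ∈ gr k l, d x ∈ gr (k + 1) l)
    {a : 𝔄} {k l k' l' : ℕ} (ha : a ∈ gr k l) (ha' : d₁' a ∈ gr k' l')
    (hpar : ((-1 : ℂ)) ^ (k' + l') = -((-1 : ℂ)) ^ (k + l)) (x : 𝔄) :
    d (d₁' (a * x)) + d₁' (d (a * x))
      = (d (d₁' a) + d₁' (d a)) * x + a * (d (d₁' x) + d₁' (d x)) := by
  have hsucc : ((-1 : ℂ)) ^ (k + 1 + l) = -((-1 : ℂ)) ^ (k + l) := by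
    rw [show k + 1 + l = (k + l) + 1 by omega, pow_succ, mul_neg_one]
  rw [h₁ k l a ha x, hd k l a ha x, map_add, map_add, map_smul, map_smul,
    hd k' l' _ ha' x, h₁ (k + 1) l _ (hdgr k l a ha) x, hd k l a ha (d₁' x),
    h₁ k l a ha (d x), hpar, hsucc]
  have hε : ((-1 : ℂ)) ^ (k + l) * ((-1 : ℂ)) ^ (k + l) = 1 := by
    rw [← pow_add, ← two_mul, pow_mul, neg_one_sq, one_pow]
  simp only [add_mul, mul_add, smul_add, smul_smul, hε, one_smul, neg_smul]
  abel

omit [Fintype ι] in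
lemma Lprod {gr : ℕ → ℕ → Submodule ℂ 𝔄} (hg : IsBigradedCommAlg 𝔄 gr)
    {d d₁' : 𝔄 →ₗ[ℂ] 𝔄} (hd : IsAntideriv gr d) (h₁ : IsAntideriv gr d₁')
    (hdgr : ∀ k l, ∀ x ∈ gr k l, d x ∈ gr (k + 1) l) {n : ℕ} :
    ∀ (a : Fin n → 𝔄) (k l k' l' : Fin n → ℕ),
      (∀ j, a j ∈ gr (k j) (l j)) → (∀ j, d₁' (a j) ∈ gr (k' j) (l' j)) →
      (∀ j, ((-1 : ℂ)) ^ (k' j + l' j) = -((-1 : ℂ)) ^ (k j + l j)) →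
      ∀ (m : Fin n → ℂ), (∀ j, d (d₁' (a j)) + d₁' (d (a j)) = m j • a j) →
      d (d₁' (List.ofFn a).prod) + d₁' (d (List.ofFn a).prod)
        = (∑ j, m j) • (List.ofFn a).prod := by
  induction n with
  | zero =>
      intro a k l k' l' _ _ _ m _
      simp [List.ofFn_zero, antideriv_map_one hg.1 hd, antideriv_map_one hg.1 h₁]
  | succ n ih =>
      intro a k l k' l' ha ha' hpar m hm
      rw [List.ofFn_succ, List.prod_cons,
        Lmul hd h₁ hdgr (ha 0) (ha' 0) (hpar 0),
        ih (fun i => a i.succ) (fun i => k i.succ) (fun i => l i.succ) (fun i => k' i.succ)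
          (fun i => l' i.succ) (fun i => ha i.succ) (fun i => ha' i.succ)
          (fun i => hpar i.succ) (fun i => m i.succ) (fun i => hm i.succ),
        hm 0, Fin.sum_univ_succ, smul_mul_assoc, mul_smul_comm, add_smul]


end Stmt10Aux


section KeyGen

set_option linter.unusedSectionVars false
set_option maxHeartbeats 1000000

variable {g : Type} [LieRing g] [LieAlgebra ℂ g] {ι : Type} [Fintype ι]
variable {𝔄 : Type} [Ring 𝔄] [Algebra ℂ 𝔄]

lemma keyGen (b : Module.Basis ι ℂ g) (W : BigradedWeil g 𝔄) (d₁' : 𝔄 →ₗ[ℂ] 𝔄)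
    (h₁ : IsAntideriv W.gr d₁')
    (hB : LinearMap.lTensor g d₁' W.B = -W.ψ)
    (hβ : LinearMap.lTensor g d₁' W.β = W.φ)
    (hA : LinearMap.lTensor g d₁' W.A = 0) (hα : LinearMap.lTensor g d₁' W.α = 0)
    (hF : LinearMap.lTensor g d₁' W.F = 0) (hφ : LinearMap.lTensor g d₁' W.φ = 0)
    (hψ : LinearMap.lTensor g d₁' W.ψ = 0) (hξ : LinearMap.lTensor g d₁' W.ξ = 0) :
    ∀ p : Fin 5,
      LinearMap.lTensor g W.d (LinearMap.lTensor g d₁' (W.genOf p))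
        + LinearMap.lTensor g d₁' (LinearMap.lTensor g W.d (W.genOf p))
      = if p = 0 then 0 else W.genOf p := by
  have hg := W.graded
  set D := LinearMap.lTensor g W.d with hDdef
  set Dl := LinearMap.lTensor g W.δ with hDldef
  set D₁ := LinearMap.lTensor g d₁' with hD₁def
  set br := gaBracket g 𝔄 with hbrdef
  -- commutation facts
  have hDDl : ∀ z, D (Dl z) = -(Dl (D z)) := by
    intro z
    have hc : W.d ∘ₗ W.δ = -(W.δ ∘ₗ W.d) := by
      ext x
      exact eq_neg_of_add_eq_zero_left (W.d_δ x)
    calc D (Dl z) = LinearMap.lTensor g (W.d ∘ₗ W.δ) z := by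
          rw [LinearMap.lTensor_comp]; rfl
      _ = -(Dl (D z)) := by
          rw [hc, LinearMap.lTensor_neg, LinearMap.lTensor_comp]; rfl
  have hDD : ∀ z, D (D z) = 0 := by
    intro z
    have hc : W.d ∘ₗ W.d = 0 := by ext x; exact W.d_sq x
    calc D (D z) = LinearMap.lTensor g (W.d ∘ₗ W.d) z := by
          rw [LinearMap.lTensor_comp]; rfl
      _ = 0 := by rw [hc, LinearMap.lTensor_zero]; rfl
  -- memberships
  have hDA_mem : D W.A ∈ gvSub g (W.gr 2 0) := gvSub_map b W.d (W.d_gr 1 0) W.A_mem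
  have hDα_mem : D W.α ∈ gvSub g (W.gr 1 1) := gvSub_map b W.d (W.d_gr 0 1) W.α_mem
  have hDlDA_mem : Dl (D W.A) ∈ gvSub g (W.gr 2 1) := gvSub_map b W.δ (W.δ_gr 2 0) hDA_mem
  -- bracket derivation rules
  have brd : ∀ (k l : ℕ) (u : g ⊗[ℂ] 𝔄), u ∈ gvSub g (W.gr k l) → ∀ v,
      D (br u v) = br (D u) v + ((-1 : ℂ)) ^ (k + l) • br u (D v) :=
    fun k l u hu v => lTensor_gaBracket b W.d_antideriv hu v
  have brdl : ∀ (k l : ℕ) (u : g ⊗[ℂ] 𝔄), u ∈ gvSub g (W.gr k l) → ∀ v,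
      Dl (br u v) = br (Dl u) v + ((-1 : ℂ)) ^ (k + l) • br u (Dl v) :=
    fun k l u hu v => lTensor_gaBracket b W.δ_antideriv hu v
  have br₁ : ∀ (k l : ℕ) (u : g ⊗[ℂ] 𝔄), u ∈ gvSub g (W.gr k l) → ∀ v,
      D₁ (br u v) = br (D₁ u) v + ((-1 : ℂ)) ^ (k + l) • br u (D₁ v) :=
    fun k l u hu v => lTensor_gaBracket b h₁ hu v
  -- structure equations rearranged
  have eDA : D W.A = W.F - (2⁻¹ : ℂ) • br W.A W.A := by rw [W.eqF]; abel
  have eDα : D W.α = W.ψ - W.ξ - br W.A W.α := by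
    rw [W.eqψ, ← W.eqξ]; abel
  have eDlA : Dl W.A = W.ξ := W.eqξ.symm
  have eDlF : Dl W.F = W.B - br W.α W.F := by rw [W.eqB]; abel
  -- D₁ vanishing facts
  have f1 : D₁ (br W.A W.A) = 0 := by
    rw [br₁ 1 0 _ W.A_mem, hA]; simp
  have f2 : D₁ (D W.A) = 0 := by
    rw [eDA, map_sub, map_smul, hF, f1]; simp
  have f3 : D₁ (D W.α) = 0 := by
    rw [eDα, map_sub, map_sub, hψ, hξ, br₁ 1 0 _ W.A_mem, hA, hα]; simp
  have f4 : D₁ (Dl W.A) = 0 := by rw [eDlA]; exact hξ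
  have f5 : D₁ (Dl W.F) = -W.ψ := by
    rw [eDlF, map_sub, hB, br₁ 0 1 _ W.α_mem, hα, hF]; simp
  have eDlbrAA : Dl (br W.A W.A) = br W.ξ W.A - br W.A W.ξ := by
    rw [brdl 1 0 _ W.A_mem, eDlA]; norm_num; abel
  have hξA : br W.ξ W.A = -br W.A W.ξ := by
    have h := gaBracket_symm b hg W.ξ_mem W.A_mem
    norm_num at h
    exact h
  have eDlDA : Dl (D W.A) = W.B - br W.α W.F + br W.A W.ξ := by
    rw [eDA, map_sub, map_smul, eDlF, eDlbrAA, hξA]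
    module
  have f6 : D₁ (Dl (D W.A)) = -W.ψ := by
    rw [eDlDA]
    simp only [map_add, map_sub]
    rw [hB, br₁ 0 1 _ W.α_mem, hα, hF, br₁ 1 0 _ W.A_mem, hA, hξ]
    simp
  -- case F
  have eDF : D W.F = (2⁻¹ : ℂ) • (br (D W.A) W.A - br W.A (D W.A)) := by
    conv_lhs => rw [W.eqF]
    rw [map_add, map_smul, hDD, brd 1 0 _ W.A_mem]
    norm_num
    module
  have gF : D₁ (D W.F) = 0 := by
    rw [eDF, map_smul, map_sub, br₁ 2 0 _ hDA_mem, br₁ 1 0 _ W.A_mem, f2, hA]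
    simp
  -- case ψ
  have eDψ : D W.ψ = -(Dl (D W.A)) + br (D W.A) W.α - br W.A (D W.α) := by
    conv_lhs => rw [W.eqψ]
    rw [map_add, map_add, hDDl, hDD, brd 1 0 _ W.A_mem]
    norm_num
    abel
  have gψ : D₁ (D W.ψ) = W.ψ := by
    rw [eDψ]
    simp only [map_add, map_sub, map_neg]
    rw [f6, br₁ 2 0 _ hDA_mem, br₁ 1 0 _ W.A_mem, f2, f3, hA, hα]
    simp
  -- case φ
  have eDφ : D W.φ = W.β - br W.A W.φ := by rw [W.eqβ]; abel
  have gφ : D₁ (D W.φ) = W.φ := by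
    rw [eDφ, map_sub, hβ, br₁ 1 0 _ W.A_mem, hA, hφ]; simp
  -- case β
  have eDβ : D W.β = br (D W.A) W.φ - br W.A (D W.φ) := by
    conv_lhs => rw [W.eqβ]
    rw [map_add, hDD, brd 1 0 _ W.A_mem]
    norm_num
    abel
  have gβ : D₁ (D W.β) = br W.A W.φ := by
    rw [eDβ]
    simp only [map_sub]
    rw [br₁ 2 0 _ hDA_mem, br₁ 1 0 _ W.A_mem, f2, hφ, hA, gφ]
    simp
  -- case B
  have eDlDF : Dl (D W.F) = (2⁻¹ : ℂ) • (br (Dl (D W.A)) W.A + br (D W.A) W.ξ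
      - br W.ξ (D W.A) + br W.A (Dl (D W.A))) := by
    rw [eDF, map_smul, map_sub, brdl 2 0 _ hDA_mem, brdl 1 0 _ W.A_mem, eDlA]
    norm_num
    module
  have hψA : br W.ψ W.A = -br W.A W.ψ := by
    have h := gaBracket_symm b hg W.ψ_mem W.A_mem
    norm_num at h
    exact h
  have gDlDF : D₁ (Dl (D W.F)) = br W.A W.ψ := by
    rw [eDlDF]
    simp only [map_smul, map_add, map_sub]
    rw [br₁ 2 1 _ hDlDA_mem, br₁ 2 0 _ hDA_mem, br₁ 1 1 _ W.ξ_mem, br₁ 1 0 _ W.A_mem,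
      f6, f2, hA, hξ]
    simp only [map_neg, LinearMap.neg_apply, map_zero, LinearMap.zero_apply, smul_zero,
      add_zero, zero_add, sub_zero, hψA, neg_neg]
    norm_num
    module
  have eDB : D W.B = -(Dl (D W.F)) + br (D W.α) W.F - br W.α (D W.F) := by
    conv_lhs => rw [W.eqB]
    rw [map_add, hDDl, brd 0 1 _ W.α_mem]
    norm_num
    abel
  have gB : D₁ (D W.B) = -br W.A W.ψ := by
    rw [eDB]
    simp only [map_sub, map_add, map_neg]
    rw [gDlDF, br₁ 1 1 _ hDα_mem, br₁ 0 1 _ W.α_mem, f3, hα, hF, gF]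
    simp
  have hFα : br W.F W.α = -br W.α W.F := by
    have h := gaBracket_symm b hg W.F_mem W.α_mem
    norm_num at h
    exact h
  have hJac : br (br W.A W.A) W.α = (2 : ℂ) • br W.A (br W.A W.α) := by
    have h := gaBracket_jacobi b hg W.A_mem W.A_mem W.α
    norm_num at h
    rw [← sub_eq_add_neg, eq_sub_iff_add_eq, ← two_smul ℂ] at h
    exact h.symm
  have eDψ2 : D W.ψ = -W.B - br W.A W.ψ := by
    rw [eDψ, eDlDA]
    conv_lhs => rw [eDA, eDα]
    simp only [map_sub, map_smul, LinearMap.sub_apply, LinearMap.smul_apply, hFα, hJac]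
    module
  -- assemble
  intro p
  fin_cases p <;> simp only [BigradedWeil.genOf] <;> norm_num
  · rw [hF, map_zero, gF]; simp
  · rw [hψ, map_zero, gψ]; simp
  · rw [hφ, map_zero, gφ]; simp
  · rw [hB, map_neg, eDψ2, gB]
    simp only [map_sub, map_neg, neg_sub, neg_neg]
    abel
  · rw [hβ, gβ, eDφ]
    abel

def sKp : Fin 5 → ℕ := ![2, 1, 0, 2, 1]
def sKq : Fin 5 → ℕ := ![0, 1, 2, 1, 2]
def sKp' : Fin 5 → ℕ := ![1, 1, 1, 1, 0]
def sKq' : Fin 5 → ℕ := ![0, 0, 0, 1, 2]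

end KeyGen

/-- Lemma 2.2, first part: with `d'₁` the antiderivation with
`d'₁B = −ψ`, `d'₁β = φ` and zero on the other generators, `dd'₁ + d'₁d` is, on the base
`ℬ(g)`, the degree operator counting the factors from `(ψ, φ, B, β)`. -/
theorem stmt_10 (g : Type) [LieRing g] [LieAlgebra ℂ g] [FiniteDimensional ℂ g]
    {ι : Type} [Fintype ι] (b : Module.Basis ι ℂ g)
    (𝔄 : Type) [Ring 𝔄] [Algebra ℂ 𝔄] (W : BigradedWeil g 𝔄)
    (d₁' : 𝔄 →ₗ[ℂ] 𝔄) (h₁ : IsAntideriv W.gr d₁')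
    (hB : LinearMap.lTensor g d₁' W.B = -W.ψ)
    (hβ : LinearMap.lTensor g d₁' W.β = W.φ)
    (hA : LinearMap.lTensor g d₁' W.A = 0) (hα : LinearMap.lTensor g d₁' W.α = 0)
    (hF : LinearMap.lTensor g d₁' W.F = 0) (hφ : LinearMap.lTensor g d₁' W.φ = 0)
    (hψ : LinearMap.lTensor g d₁' W.ψ = 0) (hξ : LinearMap.lTensor g d₁' W.ξ = 0) :
    ∀ (n : ℕ) (I : MultilinearMap ℂ (fun _ : Fin n => g) ℂ) (c : Fin n → Fin 5),
      IsInvForm I →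
      W.d (d₁' (multiEval b I fun j => W.genOf (c j)))
          + d₁' (W.d (multiEval b I fun j => W.genOf (c j)))
        = (((Finset.univ.filter fun j => c j ≠ 0).card : ℕ) : ℂ) •
            multiEval b I fun j => W.genOf (c j) := by
  intro n I c _hInv
  classical
  have hg := W.graded
  have hmemZ : ∀ p : Fin 5, W.genOf p ∈ gvSub g (W.gr (sKp p) (sKq p)) := by
    intro p
    fin_cases p <;> simp only [BigradedWeil.genOf, sKp, sKq] <;> norm_num
    exacts [W.F_mem, W.ψ_mem, W.φ_mem, W.B_mem, W.β_mem]
  have hD₁Z : ∀ p : Fin 5,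
      LinearMap.lTensor g d₁' (W.genOf p) ∈ gvSub g (W.gr (sKp' p) (sKq' p)) := by
    intro p
    fin_cases p <;> simp only [BigradedWeil.genOf, sKp', sKq'] <;> norm_num
    · rw [hF]; exact zero_mem _
    · rw [hψ]; exact zero_mem _
    · rw [hφ]; exact zero_mem _
    · rw [hB]; exact neg_mem W.ψ_mem
    · rw [hβ]; exact W.φ_mem
  have hpar5 : ∀ p : Fin 5,
      ((-1 : ℂ)) ^ (sKp' p + sKq' p) = -((-1 : ℂ)) ^ (sKp p + sKq p) := by
    intro p; fin_cases p <;> norm_num [sKp, sKq, sKp', sKq']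
  have key := keyGen b W d₁' h₁ hB hβ hA hα hF hφ hψ hξ
  have heig : ∀ (p : Fin 5) (i : ι),
      W.d (d₁' (coordEv b i (W.genOf p))) + d₁' (W.d (coordEv b i (W.genOf p)))
        = (if p = 0 then (0 : ℂ) else 1) • coordEv b i (W.genOf p) := by
    intro p i
    have h1 : W.d (d₁' (coordEv b i (W.genOf p)))
        = coordEv b i (LinearMap.lTensor g W.d (LinearMap.lTensor g d₁' (W.genOf p))) := by
      rw [coordEv_lTensor, coordEv_lTensor]
    have h2 : d₁' (W.d (coordEv b i (W.genOf p)))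
        = coordEv b i (LinearMap.lTensor g d₁' (LinearMap.lTensor g W.d (W.genOf p))) := by
      rw [coordEv_lTensor, coordEv_lTensor]
    rw [h1, h2, ← map_add, key p]
    by_cases hp : p = 0
    · simp [hp]
    · simp [hp]
  simp only [multiEval, map_sum, map_smul]
  rw [Finset.smul_sum, ← Finset.sum_add_distrib]
  refine Finset.sum_congr rfl fun iv _ => ?_
  rw [← smul_add,
    Lprod hg W.d_antideriv h₁ W.d_gr (fun j => coordEv b (iv j) (W.genOf (c j)))
      (fun j => sKp (c j)) (fun j => sKq (c j)) (fun j => sKp' (c j)) (fun j => sKq' (c j))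
      (fun j => (mem_gvSub_iff b _ _).1 (hmemZ (c j)) (iv j))
      (fun j => by
        have h := (mem_gvSub_iff b _ _).1 (hD₁Z (c j)) (iv j)
        rwa [coordEv_lTensor] at h)
      (fun j => hpar5 (c j))
      (fun j => if c j = 0 then (0 : ℂ) else 1)
      (fun j => heig (c j) (iv j)),
    smul_comm]
  congr 2
  have hb : ∀ j : Fin n, (if c j = 0 then (0 : ℂ) else 1) = if c j ≠ 0 then 1 else 0 := by
    intro j; by_cases h : c j = 0 <;> simp [h]
  rw [Finset.sum_congr rfl fun j _ => hb j, Finset.sum_boole]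

end
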